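/- Let v = (v_0,...,v_{2k}) ∈ ℝ^{2k+1} with v_0 > 0 be a singular sequence of rank r ≤ k whose Hankel matrix A_v is positive semidefinite. Then the generating polynomial p(x) := x^r − Σ_{i=0}^{r-1} φ_i x^i, where (φ_0,...,φ_{r-1}) := A_v(r-1)^{-1}(v_r,...,v_{2r-1})^T, has r distinct real roots. -/

import Mathlib

open Matrix MeasureTheory

noncomputable section

/-- The `(k+1) × (k+1)` Hankel matrix `A_v = (v_{i+j})_{i,j=0}^k`. -/
def hankel (k : ℕ) (v : ℕ → ℝ) : Matrix (Fin (k+1)) (Fin (k+1)) ℝ :=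
  Matrix.of fun i j => v (i.1 + j.1)

/-- The top-left `r × r` corner `A_v(r-1) = (v_{i+j})_{i,j=0}^{r-1}`. -/
def hcorner (v : ℕ → ℝ) (r : ℕ) : Matrix (Fin r) (Fin r) ℝ :=
  Matrix.of fun i j => v (i.1 + j.1)

/-- The `(j+1)`-th column of the Hankel matrix `A_v`. -/
def hcol (k : ℕ) (v : ℕ → ℝ) (j : ℕ) : Fin (k+1) → ℝ :=
  fun i => v (i.1 + j)

/-- `r = rank v`: column `v_r` lies in the span of the preceding columns, and `r`
is minimal with this property. -/
def seqRank (k : ℕ) (v : ℕ → ℝ) (r : ℕ) : Prop :=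
  hcol k v r ∈ Submodule.span ℝ (hcol k v '' {j | j < r}) ∧
  ∀ i < r, hcol k v i ∉ Submodule.span ℝ (hcol k v '' {j | j < i})

/-- `φ = A_v(r-1)⁻¹ (v_r,…,v_{2r-1})ᵀ`. -/
def phi (v : ℕ → ℝ) (r : ℕ) : Fin r → ℝ :=
  (hcorner v r)⁻¹.mulVec fun i => v (r + i.1)

/-- The transpose of the companion matrix of `x^r - ∑ φ_i x^i`. -/
def cmat (v : ℕ → ℝ) (r : ℕ) : Matrix (Fin r) (Fin r) ℝ :=
  Matrix.of fun i j => if (i : ℕ) + 1 = r then phi v r j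
    else if (j : ℕ) = (i : ℕ) + 1 then 1 else 0

lemma sum_extend {k r : ℕ} (hle : r ≤ k + 1) (f : Fin (k+1) → ℝ)
    (hf : ∀ i : Fin (k+1), ¬ ((i : ℕ) < r) → f i = 0) :
    ∑ i, f i = ∑ i : Fin r, f (Fin.castLE hle i) := by
  have h1 : ∑ i : Fin r, f (Fin.castLE hle i) = ∑ i ∈ Finset.univ.map (Fin.castLEEmb hle), f i := by
    rw [Finset.sum_map]
    rfl
  rw [h1]
  refine (Finset.sum_subset (Finset.subset_univ _) ?_).symm
  intro i _ hi
  refine hf i fun hlt => hi ?_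
  refine Finset.mem_map.2 ⟨⟨i, hlt⟩, Finset.mem_univ _, ?_⟩
  rfl

theorem stmt2 (k r : ℕ) (v : ℕ → ℝ) (hv0 : 0 < v 0)
    (hpsd : (hankel k v).PosSemidef) (hsing : (hankel k v).det = 0)
    (hr : r ≤ k) (hrank : seqRank k v r) :
    ∃ x : Fin r → ℝ, Function.Injective x ∧
      ∀ ℓ, x ℓ ^ r - ∑ i : Fin r, phi v r i * x ℓ ^ i.1 = 0 := by
  have hle : r ≤ k + 1 := by omega
  set A := hcorner v r with hAdef
  -- the corner is a submatrix of the PSD Hankel matrix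
  have hAps : A.PosSemidef := by
    have : A = (hankel k v).submatrix (Fin.castLE hle) (Fin.castLE hle) := rfl
    rw [this]; exact hpsd.submatrix _
  -- recurrence coefficients from seqRank
  obtain ⟨c, hc⟩ : ∃ c : Fin r → ℝ, ∑ j, c j • hcol k v (j : ℕ) = hcol k v r := by
    have himg : hcol k v '' {j | j < r} = Set.range (fun j : Fin r => hcol k v (j : ℕ)) := by
      ext x
      constructor
      · rintro ⟨j, hj, rfl⟩; exact ⟨⟨j, hj⟩, rfl⟩
      · rintro ⟨j, rfl⟩; exact ⟨(j : ℕ), j.2, rfl⟩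
    have h1 := hrank.1
    rw [himg] at h1
    exact (Submodule.mem_span_range_iff_exists_fun ℝ).1 h1
  have hcrec : ∀ m : ℕ, m ≤ k → ∑ j : Fin r, c j * v (m + (j : ℕ)) = v (m + r) := by
    intro m hm
    have := congrFun hc ⟨m, by omega⟩
    simpa [hcol, Finset.sum_apply] using this
  -- the corner is positive definite
  have hApd : A.PosDef := by
    refine Matrix.PosDef.of_dotProduct_mulVec_pos hAps.1 fun z hz => ?_
    rcases lt_or_eq_of_le (hAps.dotProduct_mulVec_nonneg z) with h | h
    · exact h
    · exfalso
      set zt : Fin (k+1) → ℝ := fun i => if h : (i : ℕ) < r then z ⟨(i : ℕ), h⟩ else 0 with hzt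
      have hzt0 : ∀ i : Fin (k+1), ¬ ((i : ℕ) < r) → zt i = 0 := by
        intro i hi; simp [hzt, hi]
      have hztc : ∀ i : Fin r, zt (Fin.castLE hle i) = z i := by
        intro i; simp [hzt, i.2]
      have hquad : star zt ⬝ᵥ (hankel k v) *ᵥ zt = star z ⬝ᵥ A *ᵥ z := by
        have hstar : star zt = zt := by simp
        have hstarz : star z = z := by simp
        rw [hstar, hstarz]
        unfold dotProduct
        rw [sum_extend hle _ (fun i hi => by rw [hzt0 i hi, zero_mul])]
        refine Finset.sum_congr rfl fun i _ => ?_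
        rw [hztc]
        congr 1
        unfold mulVec dotProduct
        rw [sum_extend hle _ (fun j hj => by rw [hzt0 j hj, mul_zero])]
        refine Finset.sum_congr rfl fun j _ => ?_
        rw [hztc]
        rfl
      have hzero : (hankel k v) *ᵥ zt = 0 := by
        refine (hpsd.dotProduct_mulVec_zero_iff zt).1 ?_
        rw [hquad, ← h]
      have hrel : ∀ m : ℕ, m ≤ k → ∑ j : Fin r, z j * v (m + (j : ℕ)) = 0 := by
        intro m hm
        have := congrFun hzero ⟨m, by omega⟩
        rw [Pi.zero_apply] at this
        unfold mulVec dotProduct at this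
        rw [sum_extend hle _ (fun j hj => by rw [hzt0 j hj, mul_zero])] at this
        rw [← this]
        refine Finset.sum_congr rfl fun j _ => ?_
        rw [hztc]
        show z j * v (m + (j : ℕ)) = v (m + (j : ℕ)) * z j
        ring
      -- largest nonzero coordinate
      set s : Finset (Fin r) := Finset.univ.filter (fun j => z j ≠ 0) with hs
      have hsne : s.Nonempty := by
        obtain ⟨j, hj⟩ := Function.ne_iff.1 hz
        exact ⟨j, Finset.mem_filter.2 ⟨Finset.mem_univ _, by simpa using hj⟩⟩
      set i := s.max' hsne with hi
      have hzi : z i ≠ 0 := by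
        have := s.max'_mem hsne
        simp [hs] at this
        exact this
      have hgt : ∀ j : Fin r, i < j → z j = 0 := by
        intro j hj
        by_contra hzj
        exact absurd (s.le_max' j (by simp [hs, hzj])) (not_le.2 hj)
      -- hcol i in span of previous columns
      apply hrank.2 (i : ℕ) i.2
      set t : Finset (Fin r) := Finset.univ.filter (fun j => j < i) with ht
      have hcoli : hcol k v (i : ℕ) = ∑ j ∈ t, (-(z j / z i)) • hcol k v (j : ℕ) := by
        funext m
        have h0 := hrel (m : ℕ) (by omega)
        have hsingle : ∑ x ∈ Finset.univ.filter (fun j => ¬ j < i), z x * v ((m : ℕ) + (x : ℕ))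
            = z i * v ((m : ℕ) + (i : ℕ)) := by
          refine Finset.sum_eq_single_of_mem i (by simp) fun j hj hji => ?_
          simp only [Finset.mem_filter, Finset.mem_univ, true_and] at hj
          rw [hgt j (lt_of_le_of_ne (not_lt.1 hj) (Ne.symm hji)), zero_mul]
        have hsplit : ∑ j ∈ t, z j * v ((m : ℕ) + (j : ℕ)) + z i * v ((m : ℕ) + (i : ℕ)) = 0 := by
          rw [← h0, ← Finset.sum_filter_add_sum_filter_not Finset.univ (fun j => j < i)
            (fun j => z j * v ((m : ℕ) + (j : ℕ))), hsingle]
        have hsum2 : ∑ j ∈ t, (-(z j / z i)) * v ((m : ℕ) + (j : ℕ))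
            = (-(z i)⁻¹) * ∑ j ∈ t, z j * v ((m : ℕ) + (j : ℕ)) := by
          rw [Finset.mul_sum]
          refine Finset.sum_congr rfl fun j _ => ?_
          field_simp
        have happ : (∑ j ∈ t, (-(z j / z i)) • hcol k v (j : ℕ)) m
            = ∑ j ∈ t, (-(z j / z i)) * v ((m : ℕ) + (j : ℕ)) := by
          rw [Finset.sum_apply]
          refine Finset.sum_congr rfl fun j _ => rfl
        show v ((m : ℕ) + (i : ℕ)) = _
        rw [happ, hsum2]
        have : ∑ j ∈ t, z j * v ((m : ℕ) + (j : ℕ)) = -(z i * v ((m : ℕ) + (i : ℕ))) := by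
          linarith
        rw [this]
        field_simp
      rw [hcoli]
      refine Submodule.sum_smul_mem _ _ fun j hj => ?_
      refine Submodule.subset_span ⟨(j : ℕ), ?_, rfl⟩
      have : j < i := by simpa [ht] using hj
      exact this
  have hdet : IsUnit A.det := isUnit_iff_ne_zero.2 hApd.det_pos.ne'
  -- phi equals c
  have hphic : phi v r = c := by
    have hAc : A *ᵥ c = fun i : Fin r => v (r + (i : ℕ)) := by
      funext i
      unfold mulVec dotProduct
      have := hcrec (i : ℕ) (by omega)
      rw [show (i : ℕ) + r = r + (i : ℕ) by omega] at this
      rw [← this]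
      refine Finset.sum_congr rfl fun j _ => ?_
      show v ((i : ℕ) + (j : ℕ)) * c j = c j * v ((i : ℕ) + (j : ℕ))
      ring
    show A⁻¹ *ᵥ (fun i : Fin r => v (r + (i : ℕ))) = c
    rw [← hAc, mulVec_mulVec, Matrix.nonsing_inv_mul A hdet, one_mulVec]
  have hkey : ∀ m : ℕ, m ≤ k → ∑ j : Fin r, phi v r j * v (m + (j : ℕ)) = v (m + r) := by
    rw [hphic]; exact hcrec
  -- companion matrix identities
  set N := cmat v r with hNdef
  have hNA : N * A = Matrix.of (fun i j : Fin r => v ((i : ℕ) + (j : ℕ) + 1)) := by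
    ext i j
    rw [Matrix.mul_apply]
    by_cases hi : (i : ℕ) + 1 = r
    · have : ∀ m : Fin r, N i m * A m j = phi v r m * v ((j : ℕ) + (m : ℕ)) := by
        intro m
        show (if (i : ℕ) + 1 = r then phi v r m else _) * v ((m : ℕ) + (j : ℕ)) = _
        rw [if_pos hi, show (m : ℕ) + (j : ℕ) = (j : ℕ) + (m : ℕ) by omega]
      simp only [this]
      rw [hkey (j : ℕ) (by omega)]
      show v ((j : ℕ) + r) = v ((i : ℕ) + (j : ℕ) + 1)
      congr 1; omega
    · have hi' : (i : ℕ) + 1 < r := by omega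
      rw [Finset.sum_eq_single (⟨(i : ℕ) + 1, hi'⟩ : Fin r)]
      · show (if (i : ℕ) + 1 = r then _ else if ((i : ℕ) + 1) = (i : ℕ) + 1 then (1:ℝ) else 0)
            * v ((i : ℕ) + 1 + (j : ℕ)) = v ((i : ℕ) + (j : ℕ) + 1)
        rw [if_neg hi, if_pos rfl, one_mul]
        congr 1; omega
      · intro m _ hm
        show (if (i : ℕ) + 1 = r then _ else if (m : ℕ) = (i : ℕ) + 1 then (1:ℝ) else 0) * _ = 0
        rw [if_neg hi, if_neg (fun h => hm (Fin.ext h)), zero_mul]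
      · intro h
        exact absurd (Finset.mem_univ _) h
  have hAsymm : Aᵀ = A := by
    ext i j
    show v ((j : ℕ) + (i : ℕ)) = v ((i : ℕ) + (j : ℕ))
    congr 1; omega
  have hANT : A * Nᵀ = N * A := by
    have h1 : (N * A)ᵀ = N * A := by
      rw [hNA]
      ext i j
      show v ((j : ℕ) + (i : ℕ) + 1) = v ((i : ℕ) + (j : ℕ) + 1)
      congr 1; omega
    calc A * Nᵀ = Aᵀ * Nᵀ := by rw [hAsymm]
      _ = (N * A)ᵀ := by rw [Matrix.transpose_mul]
      _ = N * A := h1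
  set B := A⁻¹ with hBdef
  have hBpd : B.PosDef := hApd.inv
  have hAB : A * B = 1 := Matrix.mul_nonsing_inv A hdet
  have hBA : B * A = 1 := Matrix.nonsing_inv_mul A hdet
  have hBN : B * N = Nᵀ * B := by
    calc B * N = B * N * (A * B) := by rw [hAB, Matrix.mul_one]
      _ = B * (N * A) * B := by rw [Matrix.mul_assoc, Matrix.mul_assoc, Matrix.mul_assoc]
      _ = B * (A * Nᵀ) * B := by rw [hANT]
      _ = (B * A) * (Nᵀ * B) := by rw [Matrix.mul_assoc, Matrix.mul_assoc, Matrix.mul_assoc]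
      _ = Nᵀ * B := by rw [hBA, Matrix.one_mul]
  -- inner product space from B
  letI instN := Matrix.toNormedAddCommGroup B hBpd
  letI instI := Matrix.toInnerProductSpace B hBpd.posSemidef
  have hinner : ∀ x y : Fin r → ℝ, (inner ℝ x y : ℝ) = x ⬝ᵥ B *ᵥ y := by
    intro x y
    show (B *ᵥ y) ⬝ᵥ star x = x ⬝ᵥ B *ᵥ y
    rw [show star x = x by simp, dotProduct_comm]
  have hT : @LinearMap.IsSymmetric ℝ (Fin r → ℝ) _ (Matrix.toSeminormedAddCommGroup B hBpd.posSemidef) (Matrix.toInnerProductSpace B hBpd.posSemidef) (Matrix.mulVecLin N) := by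
    intro x y
    rw [hinner, hinner]
    show (N *ᵥ x) ⬝ᵥ B *ᵥ y = x ⬝ᵥ B *ᵥ (N *ᵥ y)
    rw [mulVec_mulVec, hBN, ← mulVec_mulVec, dotProduct_comm, dotProduct_mulVec,
      ← Matrix.mulVec_transpose, dotProduct_comm]
  have hfr : Module.finrank ℝ (Fin r → ℝ) = r := Module.finrank_fin_fun ℝ
  set onb := hT.eigenvectorBasis hfr with honb
  set μ := hT.eigenvalues hfr with hμ
  have heig : ∀ ℓ, N *ᵥ (onb ℓ) = μ ℓ • onb ℓ := by
    intro ℓ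
    exact hT.apply_eigenvectorBasis hfr ℓ
  -- eigenvector structure
  have hstruct : ∀ (ℓ : Fin r) (m : ℕ) (hm : m < r),
      onb ℓ ⟨m, hm⟩ = μ ℓ ^ m * onb ℓ ⟨0, by omega⟩ := by
    intro ℓ m
    induction m with
    | zero => intro hm; rw [pow_zero, one_mul]
    | succ m ih =>
      intro hm
      have hmr : m < r := by omega
      have := congrFun (heig ℓ) ⟨m, hmr⟩
      rw [Pi.smul_apply, smul_eq_mul] at this
      have hrow : (N *ᵥ onb ℓ) ⟨m, hmr⟩ = onb ℓ ⟨m + 1, hm⟩ := by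
        unfold mulVec dotProduct
        rw [Finset.sum_eq_single (⟨m + 1, hm⟩ : Fin r)]
        · show (if m + 1 = r then _ else if m + 1 = m + 1 then (1:ℝ) else 0) * _ = _
          rw [if_neg (by omega), if_pos rfl, one_mul]
        · intro b _ hb
          show (if m + 1 = r then phi v r b else if (b : ℕ) = m + 1 then (1:ℝ) else 0) * _ = 0
          rw [if_neg (by omega), if_neg (fun h => hb (Fin.ext h)), zero_mul]
        · intro h; exact absurd (Finset.mem_univ _) h
      rw [hrow] at this
      rw [this, ih hmr, pow_succ]
      ring
  have hroot : ∀ ℓ : Fin r, μ ℓ ^ r = ∑ i : Fin r, phi v r i * μ ℓ ^ (i : ℕ) := by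
    intro ℓ
    have hr0 : 0 < r := ℓ.pos
    set u0 := onb ℓ ⟨0, hr0⟩ with hu0
    have hu0ne : u0 ≠ 0 := by
      intro h0
      have : onb ℓ = 0 := by
        funext m
        rw [Pi.zero_apply]
        have := hstruct ℓ (m : ℕ) m.2
        rw [show (⟨(m : ℕ), m.2⟩ : Fin r) = m from Fin.ext rfl] at this
        rw [this, ← hu0, h0, mul_zero]
      exact (onb.toBasis.ne_zero ℓ) (by rw [← onb.coe_toBasis] at this; exact this)
    have hlast : (N *ᵥ onb ℓ) ⟨r - 1, by omega⟩ = ∑ i : Fin r, phi v r i * onb ℓ i := by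
      unfold mulVec dotProduct
      refine Finset.sum_congr rfl fun i _ => ?_
      show (if (r - 1) + 1 = r then phi v r i else _) * _ = _
      rw [if_pos (by omega)]
    have := congrFun (heig ℓ) ⟨r - 1, by omega⟩
    rw [Pi.smul_apply, smul_eq_mul, hlast] at this
    have hval : ∀ i : Fin r, onb ℓ i = μ ℓ ^ (i : ℕ) * u0 := by
      intro i
      have := hstruct ℓ (i : ℕ) i.2
      rw [show (⟨(i : ℕ), i.2⟩ : Fin r) = i from Fin.ext rfl] at this
      exact this
    rw [hval ⟨r - 1, by omega⟩] at this
    simp only [hval] at this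
    have hpow : μ ℓ * μ ℓ ^ (r - 1) = μ ℓ ^ r := by
      rw [← pow_succ']
      congr 1
      omega
    have h2 : (∑ i : Fin r, phi v r i * μ ℓ ^ (i : ℕ)) * u0 = μ ℓ ^ r * u0 := by
      calc (∑ i : Fin r, phi v r i * μ ℓ ^ (i : ℕ)) * u0
          = ∑ i : Fin r, phi v r i * (μ ℓ ^ (i : ℕ) * u0) := by
            rw [Finset.sum_mul]
            exact Finset.sum_congr rfl fun i _ => by ring
        _ = μ ℓ * (μ ℓ ^ (r - 1) * u0) := this
        _ = μ ℓ ^ r * u0 := by rw [← mul_assoc, hpow]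
    exact (mul_right_cancel₀ hu0ne h2).symm
  -- injectivity of eigenvalues
  have hinj : Function.Injective μ := by
    intro a b hab
    by_contra hne
    have hr0 : 0 < r := a.pos
    set w : Fin r → ℝ := fun i => μ a ^ (i : ℕ) with hw
    have hua : onb a = onb a ⟨0, hr0⟩ • w := by
      funext i
      rw [Pi.smul_apply, smul_eq_mul, hw]
      have := hstruct a (i : ℕ) i.2
      rw [show (⟨(i : ℕ), i.2⟩ : Fin r) = i from Fin.ext rfl] at this
      rw [this]; ring
    have hub : onb b = onb b ⟨0, hr0⟩ • w := by
      funext i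
      rw [Pi.smul_apply, smul_eq_mul, hw]
      have := hstruct b (i : ℕ) i.2
      rw [show (⟨(i : ℕ), i.2⟩ : Fin r) = i from Fin.ext rfl] at this
      rw [this, hab]; ring
    have horth := onb.orthonormal
    set ca := onb a ⟨0, hr0⟩ with hca0
    set cb := onb b ⟨0, hr0⟩ with hcb0
    have hwne : w ≠ 0 := by
      intro h
      have := congrFun h ⟨0, hr0⟩
      simp [hw] at this
    have hWpos : 0 < w ⬝ᵥ B *ᵥ w := by
      have := hBpd.dotProduct_mulVec_pos hwne
      rwa [show star w = w by simp] at this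
    have hcane : ca ≠ 0 := by
      intro h
      have h2 : onb a = 0 := by rw [hua, h, zero_smul]
      exact (onb.toBasis.ne_zero a) (by rw [← onb.coe_toBasis] at h2; exact h2)
    have hcbne : cb ≠ 0 := by
      intro h
      have h2 : onb b = 0 := by rw [hub, h, zero_smul]
      exact (onb.toBasis.ne_zero b) (by rw [← onb.coe_toBasis] at h2; exact h2)
    have hdot : (onb a) ⬝ᵥ B *ᵥ (onb b) = 0 := by
      rw [← hinner]
      exact horth.2 hne
    rw [hua, hub, Matrix.mulVec_smul, smul_dotProduct, dotProduct_smul] at hdot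
    simp only [smul_eq_mul] at hdot
    rcases mul_eq_zero.1 hdot with h | h
    · exact hcane h
    rcases mul_eq_zero.1 h with h' | h'
    · exact hcbne h'
    · exact hWpos.ne' h'
  exact ⟨μ, hinj, fun ℓ => by rw [sub_eq_zero]; exact hroot ℓ⟩
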